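/- With the Gauss–Green formula in force and Robin boundary conditions f(0)cos α − ∇_μ f(0)sin α = 0 and f(1)cos β + ∇_μ f(1)sin β = 0 for γ = (α,β) ∈ [0,π/2]², the operator Δ_{ν,μ} is symmetric on its domain with boundary conditions: ∫ (Δ_{ν,μ} f) g dν = ∫ (Δ_{ν,μ} g) f dν for all f, g in the domain satisfying the boundary conditions. -/

import Mathlib

open MeasureTheory Set Filter

/-- Distribution function of a measure on `[0,1]`. -/
noncomputable def Fdist (μ : Measure ℝ) (x : ℝ) : ℝ := (μ (Set.Icc 0 x)).toReal

/-- Pseudo-inverse of the distribution function. -/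
noncomputable def Finv (μ : Measure ℝ) (x : ℝ) : ℝ :=
  sInf {y ∈ Set.Icc (0:ℝ) 1 | x ≤ Fdist μ y}

/-- Topological support of a measure. -/
def msupport (μ : Measure ℝ) : Set ℝ := {x | ∀ U : Set ℝ, IsOpen U → x ∈ U → 0 < μ U}

lemma Fdist_measurable (μ : Measure ℝ) [IsProbabilityMeasure μ] : Measurable (Fdist μ) := by
  have hm : Monotone (Fdist μ) := fun x y hxy =>
    ENNReal.toReal_mono (measure_ne_top μ _) (measure_mono (Set.Icc_subset_Icc_right hxy))
  exact hm.measurable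

lemma Fdist_nonneg (μ : Measure ℝ) (x : ℝ) : 0 ≤ Fdist μ x := ENNReal.toReal_nonneg

lemma Fdist_le_one (μ : Measure ℝ) [IsProbabilityMeasure μ] (x : ℝ) : Fdist μ x ≤ 1 := by
  have h : μ (Set.Icc 0 x) ≤ 1 := prob_le_one
  calc Fdist μ x ≤ (1 : ENNReal).toReal := ENNReal.toReal_mono ENNReal.one_ne_top h
  _ = 1 := by simp

lemma int_cont (ν : Measure ℝ) [IsProbabilityMeasure ν] (φ : ℝ → ℝ) (hφ : Continuous φ) :
    IntegrableOn φ (Set.Icc (0:ℝ) 1) ν :=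
  hφ.continuousOn.integrableOn_compact isCompact_Icc

lemma int_Fmul (μ ν : Measure ℝ) [IsProbabilityMeasure μ] [IsProbabilityMeasure ν]
    (φ : ℝ → ℝ) (hφ : Continuous φ) :
    IntegrableOn (fun z => Fdist μ z * φ z) (Set.Icc (0:ℝ) 1) ν := by
  refine (int_cont ν φ hφ).bdd_mul (Fdist_measurable μ).aestronglyMeasurable (c := 1) (ae_of_all _ fun x => ?_)
  rw [Real.norm_eq_abs, abs_le]
  exact ⟨by linarith [Fdist_nonneg μ x], Fdist_le_one μ x⟩

lemma Hint (μ ν : Measure ℝ) [IsProbabilityMeasure μ] [IsProbabilityMeasure ν]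
    (φ ψ : ℝ → ℝ) (hφ : Continuous φ) (hψ : Continuous ψ) :
    Integrable (fun p : ℝ × ℝ =>
        (if p.2 ≤ p.1 then Fdist μ p.1 - Fdist μ p.2 else 0) * ψ p.2 * φ p.1)
      ((ν.restrict (Set.Icc (0:ℝ) 1)).prod (ν.restrict (Set.Icc (0:ℝ) 1))) := by
  have intφ : Integrable φ (ν.restrict (Set.Icc (0:ℝ) 1)) := int_cont ν φ hφ
  have intψ : Integrable ψ (ν.restrict (Set.Icc (0:ℝ) 1)) := int_cont ν ψ hψ
  have bnd : Integrable (fun p : ℝ × ℝ => |φ p.1| * |ψ p.2|)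
      ((ν.restrict (Set.Icc (0:ℝ) 1)).prod (ν.restrict (Set.Icc (0:ℝ) 1))) :=
    intφ.abs.mul_prod intψ.abs
  have m1 : Measurable (fun p : ℝ × ℝ =>
      (if p.2 ≤ p.1 then Fdist μ p.1 - Fdist μ p.2 else 0) * ψ p.2 * φ p.1) := by
    refine (Measurable.ite (measurableSet_le measurable_snd measurable_fst)
      (((Fdist_measurable μ).comp measurable_fst).sub
        ((Fdist_measurable μ).comp measurable_snd)) measurable_const).mul
        (hψ.measurable.comp measurable_snd) |>.mul (hφ.measurable.comp measurable_fst)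
  refine bnd.mono' m1.aestronglyMeasurable (ae_of_all _ fun p => ?_)
  have h1 : |if p.2 ≤ p.1 then Fdist μ p.1 - Fdist μ p.2 else 0| ≤ 1 := by
    split
    · rw [abs_le]
      constructor <;>
        [linarith [Fdist_nonneg μ p.1, Fdist_le_one μ p.2];
         linarith [Fdist_nonneg μ p.2, Fdist_le_one μ p.1]]
    · simp
  calc ‖(if p.2 ≤ p.1 then Fdist μ p.1 - Fdist μ p.2 else 0) * ψ p.2 * φ p.1‖
      = |if p.2 ≤ p.1 then Fdist μ p.1 - Fdist μ p.2 else 0| * |ψ p.2| * |φ p.1| := by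
        rw [Real.norm_eq_abs, abs_mul, abs_mul]
    _ ≤ 1 * |ψ p.2| * |φ p.1| :=
        mul_le_mul_of_nonneg_right (mul_le_mul_of_nonneg_right h1 (abs_nonneg _)) (abs_nonneg _)
    _ = |φ p.1| * |ψ p.2| := by ring

lemma inner_convert (ν : Measure ℝ) (h : ℝ → ℝ) {y : ℝ} (hy : y ∈ Set.Icc (0:ℝ) 1) :
    ∫ z in Set.Icc 0 y, h z ∂ν
      = ∫ z in Set.Icc (0:ℝ) 1, (if z ≤ y then h z else 0) ∂ν := by
  have h1 : ∫ z in Set.Icc (0:ℝ) 1, (Set.Icc 0 y).indicator h z ∂ν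
      = ∫ z in Set.Icc (0:ℝ) 1 ∩ Set.Icc 0 y, h z ∂ν :=
    setIntegral_indicator measurableSet_Icc
  have h2 : Set.Icc (0:ℝ) 1 ∩ Set.Icc 0 y = Set.Icc 0 y :=
    Set.inter_eq_self_of_subset_right (Set.Icc_subset_Icc le_rfl hy.2)
  rw [h2] at h1
  rw [← h1]
  refine setIntegral_congr_fun measurableSet_Icc fun z hz => ?_
  by_cases hzy : z ≤ y
  · simp [Set.indicator, Set.mem_Icc, hz.1, hzy]
  · simp [Set.indicator, Set.mem_Icc, hzy]

lemma expand (μ ν : Measure ℝ) [IsProbabilityMeasure μ] [IsProbabilityMeasure ν]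
    (g fΔ gΔ : ℝ → ℝ) (bg : ℝ) (hfΔ : Continuous fΔ) (hgΔ : Continuous gΔ)
    (hg : ∀ x ∈ Set.Icc (0:ℝ) 1,
      g x = g 0 + bg * Fdist μ x + ∫ y in Set.Icc 0 x, (Fdist μ x - Fdist μ y) * gΔ y ∂ν) :
    ∫ y in Set.Icc (0:ℝ) 1, fΔ y * g y ∂ν
      = g 0 * (∫ y in Set.Icc (0:ℝ) 1, fΔ y ∂ν)
        + bg * (∫ y in Set.Icc (0:ℝ) 1, Fdist μ y * fΔ y ∂ν)
        + ∫ y in Set.Icc (0:ℝ) 1, (∫ z in Set.Icc (0:ℝ) 1,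
            (if z ≤ y then Fdist μ y - Fdist μ z else 0) * gΔ z * fΔ y ∂ν) ∂ν := by
  have key : Set.EqOn (fun y => fΔ y * g y)
      (fun y => g 0 * fΔ y + bg * (Fdist μ y * fΔ y)
        + ∫ z in Set.Icc (0:ℝ) 1,
            (if z ≤ y then Fdist μ y - Fdist μ z else 0) * gΔ z * fΔ y ∂ν)
      (Set.Icc (0:ℝ) 1) := by
    intro y hy
    simp only
    rw [hg y hy, inner_convert ν (fun z => (Fdist μ y - Fdist μ z) * gΔ z) hy]
    have e2 : ∫ z in Set.Icc (0:ℝ) 1,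
        (if z ≤ y then Fdist μ y - Fdist μ z else 0) * gΔ z * fΔ y ∂ν
        = (∫ z in Set.Icc (0:ℝ) 1,
            (if z ≤ y then (Fdist μ y - Fdist μ z) * gΔ z else 0) ∂ν) * fΔ y := by
      rw [← integral_mul_const]
      refine setIntegral_congr_fun measurableSet_Icc fun z _ => ?_
      by_cases h : z ≤ y <;> simp [h]
    rw [e2]
    ring
  rw [setIntegral_congr_fun measurableSet_Icc key]
  have i1 : Integrable (fun y => g 0 * fΔ y) (ν.restrict (Set.Icc (0:ℝ) 1)) :=
    (int_cont ν fΔ hfΔ).const_mul _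
  have i2 : Integrable (fun y => bg * (Fdist μ y * fΔ y)) (ν.restrict (Set.Icc (0:ℝ) 1)) :=
    (int_Fmul μ ν fΔ hfΔ).const_mul _
  have i3 : Integrable (fun y => ∫ z in Set.Icc (0:ℝ) 1,
      (if z ≤ y then Fdist μ y - Fdist μ z else 0) * gΔ z * fΔ y ∂ν)
      (ν.restrict (Set.Icc (0:ℝ) 1)) :=
    (Hint μ ν fΔ gΔ hfΔ hgΔ).integral_prod_left
  have i12 : Integrable (fun y => g 0 * fΔ y + bg * (Fdist μ y * fΔ y))
      (ν.restrict (Set.Icc (0:ℝ) 1)) := i1.add i2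
  rw [integral_add i12 i3, integral_add i1 i2, integral_const_mul, integral_const_mul]

theorem stmt_10 (μ ν : Measure ℝ) [IsProbabilityMeasure μ] [IsProbabilityMeasure ν] [NullSingletonClass μ]
    (hμc : μ (Set.Icc (0:ℝ) 1)ᶜ = 0) (hνc : ν (Set.Icc (0:ℝ) 1)ᶜ = 0)
    (hν0 : ν {(0:ℝ)} = 0) (hν1 : ν {(1:ℝ)} = 0)
    (hsupp : msupport ν ⊆ msupport μ)
    (f g fΔ gΔ : ℝ → ℝ) (bf bg : ℝ) (hfΔ : Continuous fΔ) (hgΔ : Continuous gΔ)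
    (hf : ∀ x ∈ Set.Icc (0:ℝ) 1,
      f x = f 0 + bf * Fdist μ x + ∫ y in Set.Icc 0 x, (Fdist μ x - Fdist μ y) * fΔ y ∂ν)
    (hg : ∀ x ∈ Set.Icc (0:ℝ) 1,
      g x = g 0 + bg * Fdist μ x + ∫ y in Set.Icc 0 x, (Fdist μ x - Fdist μ y) * gΔ y ∂ν)
    (α β : ℝ) (hα : α ∈ Set.Icc 0 (Real.pi/2)) (hβ : β ∈ Set.Icc 0 (Real.pi/2))
    (hfbc0 : f 0 * Real.cos α - bf * Real.sin α = 0)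
    (hfbc1 : f 1 * Real.cos β + (bf + ∫ y in Set.Icc (0:ℝ) 1, fΔ y ∂ν) * Real.sin β = 0)
    (hgbc0 : g 0 * Real.cos α - bg * Real.sin α = 0)
    (hgbc1 : g 1 * Real.cos β + (bg + ∫ y in Set.Icc (0:ℝ) 1, gΔ y ∂ν) * Real.sin β = 0) :
    ∫ y in Set.Icc (0:ℝ) 1, fΔ y * g y ∂ν = ∫ y in Set.Icc (0:ℝ) 1, gΔ y * f y ∂ν := by
  have intf : Integrable fΔ (ν.restrict (Set.Icc (0:ℝ) 1)) := int_cont ν fΔ hfΔ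
  have intg : Integrable gΔ (ν.restrict (Set.Icc (0:ℝ) 1)) := int_cont ν gΔ hgΔ
  have intFf := int_Fmul μ ν fΔ hfΔ
  have intFg := int_Fmul μ ν gΔ hgΔ
  have F1 : Fdist μ 1 = 1 := by
    have h := measure_add_measure_compl (μ := μ) (measurableSet_Icc : MeasurableSet (Set.Icc (0:ℝ) 1))
    rw [hμc, add_zero, measure_univ] at h
    simp [Fdist, h]
  have exf := expand μ ν g fΔ gΔ bg hfΔ hgΔ hg
  have exg := expand μ ν f gΔ fΔ bf hgΔ hfΔ hf
  have hBf : (∫ y in Set.Icc (0:ℝ) 1, Fdist μ y * fΔ y ∂ν)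
      = f 0 + bf + (∫ y in Set.Icc (0:ℝ) 1, fΔ y ∂ν) - f 1 := by
    have h1 := hf 1 (by norm_num)
    rw [F1] at h1
    have h2 : ∫ z in Set.Icc (0:ℝ) 1, (1 - Fdist μ z) * fΔ z ∂ν
        = (∫ y in Set.Icc (0:ℝ) 1, fΔ y ∂ν)
          - ∫ y in Set.Icc (0:ℝ) 1, Fdist μ y * fΔ y ∂ν := by
      simp only [sub_mul, one_mul]
      exact integral_sub intf intFf
    rw [h2] at h1
    linarith
  have hBg : (∫ y in Set.Icc (0:ℝ) 1, Fdist μ y * gΔ y ∂ν)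
      = g 0 + bg + (∫ y in Set.Icc (0:ℝ) 1, gΔ y ∂ν) - g 1 := by
    have h1 := hg 1 (by norm_num)
    rw [F1] at h1
    have h2 : ∫ z in Set.Icc (0:ℝ) 1, (1 - Fdist μ z) * gΔ z ∂ν
        = (∫ y in Set.Icc (0:ℝ) 1, gΔ y ∂ν)
          - ∫ y in Set.Icc (0:ℝ) 1, Fdist μ y * gΔ y ∂ν := by
      simp only [sub_mul, one_mul]
      exact integral_sub intg intFg
    rw [h2] at h1
    linarith
  have hswap : (∫ y in Set.Icc (0:ℝ) 1, (∫ z in Set.Icc (0:ℝ) 1,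
      (if z ≤ y then Fdist μ y - Fdist μ z else 0) * gΔ z * fΔ y ∂ν) ∂ν)
      = ∫ z in Set.Icc (0:ℝ) 1, (∫ y in Set.Icc (0:ℝ) 1,
      (if z ≤ y then Fdist μ y - Fdist μ z else 0) * gΔ z * fΔ y ∂ν) ∂ν :=
    integral_integral_swap (Hint μ ν fΔ gΔ hfΔ hgΔ)
  have hdiff : (∫ y in Set.Icc (0:ℝ) 1, (∫ z in Set.Icc (0:ℝ) 1,
        (if z ≤ y then Fdist μ y - Fdist μ z else 0) * gΔ z * fΔ y ∂ν) ∂ν)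
      - (∫ y in Set.Icc (0:ℝ) 1, (∫ z in Set.Icc (0:ℝ) 1,
        (if z ≤ y then Fdist μ y - Fdist μ z else 0) * fΔ z * gΔ y ∂ν) ∂ν)
      = (∫ y in Set.Icc (0:ℝ) 1, Fdist μ y * fΔ y ∂ν) * (∫ y in Set.Icc (0:ℝ) 1, gΔ y ∂ν)
        - (∫ y in Set.Icc (0:ℝ) 1, fΔ y ∂ν)
          * (∫ y in Set.Icc (0:ℝ) 1, Fdist μ y * gΔ y ∂ν) := by
    rw [hswap]
    have O1 : Integrable (fun z => ∫ y in Set.Icc (0:ℝ) 1,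
        (if z ≤ y then Fdist μ y - Fdist μ z else 0) * gΔ z * fΔ y ∂ν)
        (ν.restrict (Set.Icc (0:ℝ) 1)) := (Hint μ ν fΔ gΔ hfΔ hgΔ).integral_prod_right
    have O2 : Integrable (fun z => ∫ w in Set.Icc (0:ℝ) 1,
        (if w ≤ z then Fdist μ z - Fdist μ w else 0) * fΔ w * gΔ z ∂ν)
        (ν.restrict (Set.Icc (0:ℝ) 1)) := (Hint μ ν gΔ fΔ hgΔ hfΔ).integral_prod_left
    rw [← integral_sub O1 O2]
    have hae : ∀ᵐ z ∂(ν.restrict (Set.Icc (0:ℝ) 1)),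
        ((∫ y in Set.Icc (0:ℝ) 1,
            (if z ≤ y then Fdist μ y - Fdist μ z else 0) * gΔ z * fΔ y ∂ν)
          - ∫ w in Set.Icc (0:ℝ) 1,
            (if w ≤ z then Fdist μ z - Fdist μ w else 0) * fΔ w * gΔ z ∂ν)
        = (∫ y in Set.Icc (0:ℝ) 1, Fdist μ y * fΔ y ∂ν) * gΔ z
          - (∫ y in Set.Icc (0:ℝ) 1, fΔ y ∂ν) * (Fdist μ z * gΔ z) := by
      filter_upwards [(Hint μ ν fΔ gΔ hfΔ hgΔ).prod_left_ae,
        (Hint μ ν gΔ fΔ hgΔ hfΔ).prod_right_ae] with z hz1 hz2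
      rw [← integral_sub hz1 hz2]
      have hpt : ∀ y : ℝ, (if z ≤ y then Fdist μ y - Fdist μ z else 0) * gΔ z * fΔ y
          - (if y ≤ z then Fdist μ z - Fdist μ y else 0) * fΔ y * gΔ z
          = gΔ z * (Fdist μ y * fΔ y) - (gΔ z * Fdist μ z) * fΔ y := by
        intro y
        rcases lt_trichotomy z y with h | h | h
        · rw [if_pos h.le, if_neg (not_le.mpr h)]; ring
        · subst h; simp only [le_refl, if_pos]; ring
        · rw [if_neg (not_le.mpr h), if_pos h.le]; ring
      calc ∫ y in Set.Icc (0:ℝ) 1,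
            ((if z ≤ y then Fdist μ y - Fdist μ z else 0) * gΔ z * fΔ y
              - (if y ≤ z then Fdist μ z - Fdist μ y else 0) * fΔ y * gΔ z) ∂ν
          = ∫ y in Set.Icc (0:ℝ) 1,
            (gΔ z * (Fdist μ y * fΔ y) - (gΔ z * Fdist μ z) * fΔ y) ∂ν :=
            integral_congr_ae (Filter.Eventually.of_forall hpt)
        _ = gΔ z * (∫ y in Set.Icc (0:ℝ) 1, Fdist μ y * fΔ y ∂ν)
            - (gΔ z * Fdist μ z) * ∫ y in Set.Icc (0:ℝ) 1, fΔ y ∂ν := by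
            rw [integral_sub (intFf.const_mul _) (intf.const_mul _),
              integral_const_mul, integral_const_mul]
        _ = (∫ y in Set.Icc (0:ℝ) 1, Fdist μ y * fΔ y ∂ν) * gΔ z
            - (∫ y in Set.Icc (0:ℝ) 1, fΔ y ∂ν) * (Fdist μ z * gΔ z) := by ring
    rw [integral_congr_ae hae]
    rw [integral_sub (intg.const_mul _) (intFg.const_mul _),
      integral_const_mul, integral_const_mul]
  have e1 : f 0 * bg - g 0 * bf = 0 := by
    by_cases hc : Real.cos α = 0
    · have hs : Real.sin α ≠ 0 := by
        intro h
        have h2 := Real.sin_sq_add_cos_sq α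
        rw [h, hc] at h2; norm_num at h2
      have hbf : bf = 0 := by
        have h3 : bf * Real.sin α = 0 := by rw [hc] at hfbc0; linarith
        exact (mul_eq_zero.mp h3).resolve_right hs
      have hbg : bg = 0 := by
        have h3 : bg * Real.sin α = 0 := by rw [hc] at hgbc0; linarith
        exact (mul_eq_zero.mp h3).resolve_right hs
      rw [hbf, hbg]; ring
    · have h : (f 0 * bg - g 0 * bf) * Real.cos α = 0 := by
        linear_combination bg * hfbc0 - bf * hgbc0
      exact (mul_eq_zero.mp h).resolve_right hc
  have e2 : (bf + ∫ y in Set.Icc (0:ℝ) 1, fΔ y ∂ν) * g 1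
      - (bg + ∫ y in Set.Icc (0:ℝ) 1, gΔ y ∂ν) * f 1 = 0 := by
    by_cases hc : Real.cos β = 0
    · have hs : Real.sin β ≠ 0 := by
        intro h
        have h2 := Real.sin_sq_add_cos_sq β
        rw [h, hc] at h2; norm_num at h2
      have hPf : (bf + ∫ y in Set.Icc (0:ℝ) 1, fΔ y ∂ν) = 0 := by
        have h3 : (bf + ∫ y in Set.Icc (0:ℝ) 1, fΔ y ∂ν) * Real.sin β = 0 := by
          rw [hc] at hfbc1; linarith
        exact (mul_eq_zero.mp h3).resolve_right hs
      have hPg : (bg + ∫ y in Set.Icc (0:ℝ) 1, gΔ y ∂ν) = 0 := by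
        have h3 : (bg + ∫ y in Set.Icc (0:ℝ) 1, gΔ y ∂ν) * Real.sin β = 0 := by
          rw [hc] at hgbc1; linarith
        exact (mul_eq_zero.mp h3).resolve_right hs
      rw [hPf, hPg]; ring
    · have h : ((bf + ∫ y in Set.Icc (0:ℝ) 1, fΔ y ∂ν) * g 1
          - (bg + ∫ y in Set.Icc (0:ℝ) 1, gΔ y ∂ν) * f 1) * Real.cos β = 0 := by
        linear_combination (bf + ∫ y in Set.Icc (0:ℝ) 1, fΔ y ∂ν) * hgbc1
          - (bg + ∫ y in Set.Icc (0:ℝ) 1, gΔ y ∂ν) * hfbc1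
      exact (mul_eq_zero.mp h).resolve_right hc
  rw [exf, exg]
  linear_combination hdiff + (bg + ∫ y in Set.Icc (0:ℝ) 1, gΔ y ∂ν) * hBf
    - (bf + ∫ y in Set.Icc (0:ℝ) 1, fΔ y ∂ν) * hBg + e1 + e2
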